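/- For every natural number k ≥ 1, the ring ℤ[x,y]/(x²·y^{2k}, y²−2k·x·y) is not finitely generated as a ℤ-module; in particular it is not isomorphic to ℤ[x,y]/(x², y²−2k·x·y), which is a free ℤ-module of rank 4. -/

import Mathlib

open MvPolynomial

noncomputable section

def Iα (k : ℕ) : Ideal (MvPolynomial (Fin 2) ℤ) :=
  Ideal.span ({X 0 ^ 2 * X 1 ^ (2 * k),
    X 1 ^ 2 - ((2 * k : ℕ) : MvPolynomial (Fin 2) ℤ) * (X 0 * X 1)} :
    Set (MvPolynomial (Fin 2) ℤ))

def φα : MvPolynomial (Fin 2) ℤ →ₐ[ℤ] Polynomial ℤ := aeval ![Polynomial.X, 0]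

theorem notfin (k : ℕ) (hk : 1 ≤ k) :
    ¬ Module.Finite ℤ (MvPolynomial (Fin 2) ℤ ⧸ Iα k) := by
  intro h
  have hker : Iα k ≤ RingHom.ker φα := by
    rw [Iα, Ideal.span_le]
    rintro p hp
    simp only [Set.mem_insert_iff, Set.mem_singleton_iff] at hp
    rcases hp with rfl | rfl <;>
      simp [RingHom.mem_ker, φα, zero_pow (by omega : 2 * k ≠ 0)]
  let Φ : (MvPolynomial (Fin 2) ℤ ⧸ Iα k) →ₐ[ℤ] Polynomial ℤ :=
    Ideal.Quotient.liftₐ (Iα k) φα (fun a ha => hker ha)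
  have hsurj : Function.Surjective Φ := by
    rw [← AlgHom.range_eq_top]
    rw [eq_top_iff, ← Polynomial.adjoin_X (R := ℤ), Algebra.adjoin_le_iff]
    rintro p rfl
    exact ⟨Ideal.Quotient.mk _ (X 0), by show φα (X 0) = Polynomial.X; simp [φα]⟩
  have : Module.Finite ℤ (Polynomial ℤ) :=
    Module.Finite.of_surjective Φ.toLinearMap hsurj
  exact Polynomial.not_finite this


def Iβ (k : ℕ) : Ideal (MvPolynomial (Fin 2) ℤ) :=
  Ideal.span ({X 0 ^ 2,
    X 1 ^ 2 - ((2 * k : ℕ) : MvPolynomial (Fin 2) ℤ) * (X 0 * X 1)} :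
    Set (MvPolynomial (Fin 2) ℤ))

abbrev Rone : Type := AdjoinRoot (Polynomial.X ^ 2 : Polynomial ℤ)

def aelt (k : ℕ) : Rone := ((2 * k : ℕ) : Rone) * AdjoinRoot.root _

instance : Nontrivial Rone :=
  AdjoinRoot.nontrivial _ (by rw [Polynomial.degree_X_pow]; norm_num)

def fk (k : ℕ) : Polynomial Rone :=
  Polynomial.X * (Polynomial.X - Polynomial.C (aelt k))

theorem fk_natDegree (k : ℕ) : (fk k).natDegree = 2 := by
  rw [fk, Polynomial.natDegree_mul' (by simp)]
  simp

theorem fk_monic (k : ℕ) : (fk k).Monic :=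
  Polynomial.monic_X.mul (Polynomial.monic_X_sub_C _)

abbrev Rtwo (k : ℕ) : Type := AdjoinRoot (fk k)

def bone : Module.Basis (Fin 2) ℤ Rone :=
  (AdjoinRoot.powerBasis' (Polynomial.monic_X_pow 2)).basis.reindex
    (finCongr (by simp))

def btwo (k : ℕ) : Module.Basis (Fin 2) Rone (Rtwo k) :=
  (AdjoinRoot.powerBasis' (fk_monic k)).basis.reindex
    (finCongr (fk_natDegree k))

instance (k : ℕ) : IsScalarTower ℤ Rone (Rtwo k) :=
  IsScalarTower.of_algebraMap_eq' (Subsingleton.elim _ _)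

def bfour (k : ℕ) : Module.Basis (Fin 4) ℤ (Rtwo k) :=
  ((bone).smulTower (btwo k)).reindex (finProdFinEquiv.trans (finCongr rfl))

-- key relations
theorem root1_sq : (AdjoinRoot.root (Polynomial.X ^ 2 : Polynomial ℤ)) ^ 2 = 0 := by
  rw [← AdjoinRoot.mk_X, ← map_pow, AdjoinRoot.mk_self]

theorem fk_rel (k : ℕ) :
    AdjoinRoot.root (fk k) * (AdjoinRoot.root (fk k)
      - AdjoinRoot.of (fk k) (aelt k)) = 0 := by
  have h := AdjoinRoot.mk_self (f := fk k)
  rw [fk] at h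
  simp only [map_mul, map_sub, AdjoinRoot.mk_X, AdjoinRoot.mk_C] at h
  exact h

theorem rootf_rel (k : ℕ) :
    AdjoinRoot.root (fk k) ^ 2 =
      AdjoinRoot.of (fk k) (aelt k) * AdjoinRoot.root (fk k) := by
  linear_combination fk_rel k

def x2 (k : ℕ) : Rtwo k := AdjoinRoot.of (fk k) (AdjoinRoot.root _)
def y2 (k : ℕ) : Rtwo k := AdjoinRoot.root (fk k)

def φβ (k : ℕ) : MvPolynomial (Fin 2) ℤ →ₐ[ℤ] Rtwo k := aeval ![x2 k, y2 k]

theorem φβ_ker (k : ℕ) : Iβ k ≤ RingHom.ker (φβ k) := by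
  rw [Iβ, Ideal.span_le]
  rintro p hp
  simp only [Set.mem_insert_iff, Set.mem_singleton_iff] at hp
  rcases hp with rfl | rfl
  · simp only [SetLike.mem_coe, RingHom.mem_ker, φβ, map_pow, aeval_X]
    show (x2 k) ^ 2 = 0
    rw [x2, ← map_pow, root1_sq, map_zero]
  · simp only [SetLike.mem_coe, RingHom.mem_ker, φβ, map_sub, map_pow, map_mul,
      map_natCast, aeval_X]
    show (y2 k) ^ 2 - ((2 * k : ℕ) : Rtwo k) * (x2 k * y2 k) = 0
    rw [y2, x2, rootf_rel, aelt, map_mul, map_natCast]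
    ring

def Φβ (k : ℕ) : (MvPolynomial (Fin 2) ℤ ⧸ Iβ k) →ₐ[ℤ] Rtwo k :=
  Ideal.Quotient.liftₐ (Iβ k) (φβ k) (fun a ha => φβ_ker k ha)

def xB (k : ℕ) : MvPolynomial (Fin 2) ℤ ⧸ Iβ k := Ideal.Quotient.mk _ (X 0)
def yB (k : ℕ) : MvPolynomial (Fin 2) ℤ ⧸ Iβ k := Ideal.Quotient.mk _ (X 1)

theorem xB_sq (k : ℕ) : xB k ^ 2 = 0 := by
  rw [xB, ← map_pow, Ideal.Quotient.eq_zero_iff_mem]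
  exact Ideal.subset_span (by simp)

theorem yB_rel (k : ℕ) :
    yB k ^ 2 - ((2 * k : ℕ) : MvPolynomial (Fin 2) ℤ ⧸ Iβ k) * (xB k * yB k) = 0 := by
  rw [xB, yB, ← map_natCast (Ideal.Quotient.mk (Iβ k)) (2 * k), ← map_mul, ← map_pow,
    ← map_mul, ← map_sub, Ideal.Quotient.eq_zero_iff_mem]
  exact Ideal.subset_span (by simp)

def ψ1 (k : ℕ) : Rone →+* (MvPolynomial (Fin 2) ℤ ⧸ Iβ k) :=
  AdjoinRoot.lift (algebraMap ℤ _) (xB k) (by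
    simp only [Polynomial.eval₂_X_pow]
    exact xB_sq k)

def ψβ (k : ℕ) : Rtwo k →+* (MvPolynomial (Fin 2) ℤ ⧸ Iβ k) :=
  AdjoinRoot.lift (ψ1 k) (yB k) (by
    rw [fk]
    simp only [Polynomial.eval₂_mul, Polynomial.eval₂_sub, Polynomial.eval₂_X,
      Polynomial.eval₂_C]
    have h1 : (ψ1 k) (aelt k) = ((2 * k : ℕ) : _) * xB k := by
      rw [aelt, map_mul, map_natCast, ψ1, AdjoinRoot.lift_root]
    rw [h1]
    linear_combination yB_rel k)

theorem Φβ_xB (k : ℕ) : Φβ k (xB k) = x2 k := by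
  rw [Φβ, xB]; show φβ k (X 0) = x2 k; simp [φβ]

theorem Φβ_yB (k : ℕ) : Φβ k (yB k) = y2 k := by
  rw [Φβ, yB]; show φβ k (X 1) = y2 k; simp [φβ]

theorem key1 (k : ℕ) : ∀ a : Rone, Φβ k (ψ1 k a) = AdjoinRoot.of (fk k) a := by
  have h : ((Φβ k : _ →+* Rtwo k).comp (ψ1 k)).comp (AdjoinRoot.mk _) =
      (AdjoinRoot.of (fk k)).comp (AdjoinRoot.mk _) := by
    apply Polynomial.ringHom_ext
    · intro n
      simp [Polynomial.C_eq_intCast, map_intCast]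
    · simp only [RingHom.comp_apply, AdjoinRoot.mk_X, ψ1, AdjoinRoot.lift_root]
      exact Φβ_xB k
  intro a
  obtain ⟨p, rfl⟩ := AdjoinRoot.mk_surjective a
  exact RingHom.congr_fun h p

theorem key2 (k : ℕ) : ∀ z : Rtwo k, Φβ k (ψβ k z) = z := by
  have h : ((Φβ k : _ →+* Rtwo k).comp (ψβ k)).comp (AdjoinRoot.mk (fk k)) =
      AdjoinRoot.mk (fk k) := by
    apply Polynomial.ringHom_ext
    · intro a
      simp only [RingHom.comp_apply, AdjoinRoot.mk_C, ψβ, AdjoinRoot.lift_of]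
      exact key1 k a
    · simp only [RingHom.comp_apply, AdjoinRoot.mk_X, ψβ, AdjoinRoot.lift_root]
      exact Φβ_yB k
  intro z
  obtain ⟨p, rfl⟩ := AdjoinRoot.mk_surjective z
  exact RingHom.congr_fun h p

theorem key3 (k : ℕ) : ∀ w, ψβ k (Φβ k w) = w := by
  have h : ∀ p : MvPolynomial (Fin 2) ℤ,
      ψβ k (Φβ k (Ideal.Quotient.mk (Iβ k) p)) = Ideal.Quotient.mk (Iβ k) p := by
    have hh : ((ψβ k).comp (Φβ k : _ →+* Rtwo k)).comp (Ideal.Quotient.mk (Iβ k)) =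
        (Ideal.Quotient.mk (Iβ k) : _ →+* _) := by
      apply MvPolynomial.ringHom_ext
      · intro n
        rw [MvPolynomial.hom_C, MvPolynomial.hom_C]
      · intro i
        fin_cases i
        · show ψβ k (Φβ k (xB k)) = xB k
          rw [Φβ_xB, x2, ψβ, AdjoinRoot.lift_of, ψ1, AdjoinRoot.lift_root]
        · show ψβ k (Φβ k (yB k)) = yB k
          rw [Φβ_yB, y2, ψβ, AdjoinRoot.lift_root]
    intro p
    exact RingHom.congr_fun hh p
  intro w
  obtain ⟨p, rfl⟩ := Ideal.Quotient.mk_surjective w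
  exact h p

def eβ (k : ℕ) : (MvPolynomial (Fin 2) ℤ ⧸ Iβ k) ≃+* Rtwo k :=
  RingEquiv.ofRingHom ((Φβ k).toRingHom) (ψβ k)
    (RingHom.ext (key2 k)) (RingHom.ext (key3 k))

def basisB (k : ℕ) : Module.Basis (Fin 4) ℤ (MvPolynomial (Fin 2) ℤ ⧸ Iβ k) :=
  (bfour k).map ((eβ k).toAddEquiv.toIntLinearEquiv).symm

end

open MvPolynomial

/-- For `k ≥ 1`, the ring `ℤ[x,y]/(x²·y^{2k}, y² − 2k·x·y)` is not finitely
generated as a ℤ-module; in particular it is not isomorphic to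
`ℤ[x,y]/(x², y² − 2k·x·y)`, which is a free ℤ-module of rank 4. -/
theorem stmt_12 (k : ℕ) (hk : 1 ≤ k) :
    ¬ Module.Finite ℤ
      (MvPolynomial (Fin 2) ℤ ⧸ Ideal.span
        ({X 0 ^ 2 * X 1 ^ (2 * k),
          X 1 ^ 2 - ((2 * k : ℕ) : MvPolynomial (Fin 2) ℤ) * (X 0 * X 1)} :
          Set (MvPolynomial (Fin 2) ℤ))) ∧
    Nonempty (Module.Basis (Fin 4) ℤ
      (MvPolynomial (Fin 2) ℤ ⧸ Ideal.span
        ({X 0 ^ 2,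
          X 1 ^ 2 - ((2 * k : ℕ) : MvPolynomial (Fin 2) ℤ) * (X 0 * X 1)} :
          Set (MvPolynomial (Fin 2) ℤ)))) ∧
    IsEmpty
      ((MvPolynomial (Fin 2) ℤ ⧸ Ideal.span
        ({X 0 ^ 2 * X 1 ^ (2 * k),
          X 1 ^ 2 - ((2 * k : ℕ) : MvPolynomial (Fin 2) ℤ) * (X 0 * X 1)} :
          Set (MvPolynomial (Fin 2) ℤ))) ≃+*
       (MvPolynomial (Fin 2) ℤ ⧸ Ideal.span
        ({X 0 ^ 2,
          X 1 ^ 2 - ((2 * k : ℕ) : MvPolynomial (Fin 2) ℤ) * (X 0 * X 1)} :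
          Set (MvPolynomial (Fin 2) ℤ)))) := by
  refine ⟨notfin k hk, ⟨basisB k⟩, ⟨fun e => ?_⟩⟩
  haveI hB : Module.Finite ℤ
      (MvPolynomial (Fin 2) ℤ ⧸ Ideal.span
        ({X 0 ^ 2,
          X 1 ^ 2 - ((2 * k : ℕ) : MvPolynomial (Fin 2) ℤ) * (X 0 * X 1)} :
          Set (MvPolynomial (Fin 2) ℤ))) :=
    Module.Finite.of_basis (basisB k)
  have hA : Module.Finite ℤ (MvPolynomial (Fin 2) ℤ ⧸ Iα k) :=
    Module.Finite.equiv (e.toAddEquiv.toIntLinearEquiv).symm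
  exact notfin k hk hA
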